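/- Let q be a prime power, a a positive integer with 1 ≤ a ≤ q - 2, and let f ∈ F_q[x,y] be a nonzero polynomial of total degree at most a. Then the number of points (s,t) ∈ (F_q^×)² with f(s,t) = 0 is at most a(q-1). Consequently the evaluation code on (F_q^×)² of polynomials of degree ≤ a has minimum distance at least (q-1)² - a(q-1). -/

import Mathlib

open MvPolynomial Finset

variable {F : Type} [Field F] [Fintype F] [DecidableEq F]

lemma count_roots_units (p : Polynomial F) (hp : p ≠ 0) :
    (univ.filter fun u : Fˣ => p.eval (u : F) = 0).card ≤ p.natDegree := by
  have h1 : ∀ u : Fˣ, u ∈ univ.filter (fun u : Fˣ => p.eval (u : F) = 0) →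
      (u : F) ∈ p.roots.toFinset := by
    intro u hu
    simp only [mem_filter] at hu
    simp [Polynomial.mem_roots, hp, Polynomial.IsRoot, hu.2]
  calc (univ.filter fun u : Fˣ => p.eval (u : F) = 0).card
      ≤ p.roots.toFinset.card :=
        Finset.card_le_card_of_injOn (fun u => (u : F)) h1
          (fun u _ v _ h => Units.ext h)
    _ ≤ Multiset.card p.roots := Multiset.toFinset_card_le _
    _ ≤ p.natDegree := Polynomial.card_roots' p

lemma eval_fin0_injective (s : Fin 0 → F) :
    Function.Injective (eval s) := by
  have key : (eval s : MvPolynomial (Fin 0) F →+* F) =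
      (isEmptyRingEquiv F (Fin 0) : MvPolynomial (Fin 0) F →+* F) := by
    apply MvPolynomial.ringHom_ext
    · intro r; simp [isEmptyRingEquiv]; exact (MvPolynomial.coeff_zero_C r).symm
    · intro i; exact i.elim0
  intro x y h
  apply (isEmptyRingEquiv F (Fin 0)).injective
  rw [key] at h
  exact h

lemma count_roots_mv1 (q : MvPolynomial (Fin 1) F) (hq : q ≠ 0) :
    (univ.filter fun u : Fˣ => eval ![(u : F)] q = 0).card ≤ q.totalDegree := by
  classical
  set p := (finSuccEquiv F 0 q).map (eval (fun i : Fin 0 => i.elim0)) with hp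
  have heval : ∀ u : F, eval ![u] q = p.eval u := by
    intro u
    have h2 : ![u] = Fin.cons u (fun i : Fin 0 => i.elim0) := by
      funext i; fin_cases i; rfl
    rw [h2]
    exact eval_eq_eval_mv_eval' (fun i : Fin 0 => i.elim0) u q
  have hpne : p ≠ 0 := by
    intro h
    rw [hp] at h
    apply hq
    exact (finSuccEquiv F 0).injective (by
      simpa using Polynomial.map_injective _
        (eval_fin0_injective (fun i : Fin 0 => i.elim0))
        (h.trans (Polynomial.map_zero _).symm))
  calc (univ.filter fun u : Fˣ => eval ![(u : F)] q = 0).card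
      = (univ.filter fun u : Fˣ => p.eval (u : F) = 0).card := by
        simp only [heval]
    _ ≤ p.natDegree := count_roots_units p hpne
    _ ≤ (finSuccEquiv F 0 q).natDegree := Polynomial.natDegree_map_le
    _ = q.degreeOf 0 := natDegree_finSuccEquiv q
    _ ≤ q.totalDegree := degreeOf_le_totalDegree q 0


lemma zeros_count_bound (a : ℕ)
    (f : MvPolynomial (Fin 2) F) (hf : f ≠ 0) (hdeg : f.totalDegree ≤ a) :
    (univ.filter fun t : Fˣ × Fˣ => eval ![((t.1 : F)), ((t.2 : F))] f = 0).card ≤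
      a * (Fintype.card F - 1) := by
  classical
  set Q := finSuccEquiv F 1 f with hQ
  have hQne : Q ≠ 0 := fun h => hf ((finSuccEquiv F 1).injective (by simp [← hQ, h]))
  set d := Q.natDegree with hd
  set c := Q.leadingCoeff with hc
  have hcne : c ≠ 0 := Polynomial.leadingCoeff_ne_zero.2 hQne
  have hda : d ≤ a := by
    rw [hd, natDegree_finSuccEquiv]
    exact le_trans (degreeOf_le_totalDegree f 0) hdeg
  have hcdeg : c.totalDegree ≤ a - d := by
    have h1 : c.totalDegree + d ≤ f.totalDegree := by
      rw [hc, Polynomial.leadingCoeff, hd]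
      exact totalDegree_coeff_finSuccEquiv_add_le f Q.natDegree
        (by rw [← Polynomial.leadingCoeff]; exact hcne)
    omega
  -- evaluation identity
  have heval : ∀ (u b : F), eval ![u, b] f = (Q.map (eval ![b])).eval u := by
    intro u b
    have h2 : ![u, b] = Fin.cons u ![b] := rfl
    rw [h2]
    have h3 := eval_eq_eval_mv_eval' (![b] : Fin 1 → F) u f
    exact h3
  -- per-fiber bound
  have Nbound : ∀ b : Fˣ,
      (univ.filter fun u : Fˣ => eval ![(u : F), (b : F)] f = 0).card ≤
        if eval ![(b : F)] c = 0 then Fintype.card F - 1 else d := by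
    intro b
    by_cases hb : eval ![(b : F)] c = 0
    · rw [if_pos hb]
      calc (univ.filter fun u : Fˣ => eval ![(u : F), (b : F)] f = 0).card
          ≤ (univ : Finset Fˣ).card := Finset.card_filter_le _ _
        _ = Fintype.card F - 1 := by rw [Finset.card_univ, Fintype.card_units]
    · rw [if_neg hb]
      set P := Q.map (eval ![(b : F)]) with hP
      have hPne : P ≠ 0 := by
        intro h
        apply hb
        have : P.coeff d = 0 := by rw [h]; simp
        rwa [hP, Polynomial.coeff_map, hd, ← Polynomial.leadingCoeff, ← hc] at this
      calc (univ.filter fun u : Fˣ => eval ![(u : F), (b : F)] f = 0).card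
          = (univ.filter fun u : Fˣ => P.eval (u : F) = 0).card := by
            simp only [heval, hP]
        _ ≤ P.natDegree := count_roots_units P hPne
        _ ≤ d := Polynomial.natDegree_map_le
  -- fiberwise counting
  have hfiber : (univ.filter fun t : Fˣ × Fˣ => eval ![((t.1 : F)), ((t.2 : F))] f = 0).card
      = ∑ b : Fˣ, ((univ.filter fun t : Fˣ × Fˣ =>
          eval ![((t.1 : F)), ((t.2 : F))] f = 0).filter fun t => t.2 = b).card :=
    Finset.card_eq_sum_card_fiberwise (fun t _ => mem_univ t.2)
  have hfib2 : ∀ b : Fˣ, ((univ.filter fun t : Fˣ × Fˣ =>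
        eval ![((t.1 : F)), ((t.2 : F))] f = 0).filter fun t => t.2 = b).card ≤
      (univ.filter fun u : Fˣ => eval ![(u : F), (b : F)] f = 0).card := by
    intro b
    apply Finset.card_le_card_of_injOn (fun t => t.1)
    · intro t ht
      simp only [mem_coe, mem_filter, mem_univ, true_and] at ht ⊢
      rw [← ht.2]
      exact ht.1
    · intro t ht t' ht' h
      simp only [coe_filter, Set.mem_setOf_eq] at ht ht'
      exact Prod.ext h (ht.2.trans ht'.2.symm)
  rw [hfiber]
  calc ∑ b : Fˣ, ((univ.filter fun t : Fˣ × Fˣ =>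
          eval ![((t.1 : F)), ((t.2 : F))] f = 0).filter fun t => t.2 = b).card
      ≤ ∑ b : Fˣ, if eval ![(b : F)] c = 0 then Fintype.card F - 1 else d :=
        Finset.sum_le_sum (fun b _ => le_trans (hfib2 b) (Nbound b))
    _ = ∑ b ∈ univ.filter (fun b : Fˣ => eval ![(b : F)] c = 0), (Fintype.card F - 1)
        + ∑ b ∈ univ.filter (fun b : Fˣ => ¬ eval ![(b : F)] c = 0), d := by
        rw [Finset.sum_ite]
    _ ≤ (a - d) * (Fintype.card F - 1) + (Fintype.card F - 1) * d := by
        apply Nat.add_le_add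
        · rw [Finset.sum_const, smul_eq_mul]
          exact Nat.mul_le_mul_right _ (le_trans (count_roots_mv1 c hcne) hcdeg)
        · rw [Finset.sum_const, smul_eq_mul]
          apply Nat.mul_le_mul_right
          calc (univ.filter fun b : Fˣ => ¬ eval ![(b : F)] c = 0).card
              ≤ (univ : Finset Fˣ).card := Finset.card_filter_le _ _
            _ = Fintype.card F - 1 := by rw [Finset.card_univ, Fintype.card_units]
    _ = a * (Fintype.card F - 1) := by
        rw [Nat.mul_comm (Fintype.card F - 1) d, ← Nat.add_mul, Nat.sub_add_cancel hda]


lemma aeval_eq_eval' (x : Fin 2 → F) (f : MvPolynomial (Fin 2) F) :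
    aeval x f = eval x f :=
  RingHom.congr_fun (coe_aeval_eq_eval x) f


/-- Evaluation of a polynomial in two variables at all points of the torus
`(F^×)²`, as a linear map. -/
noncomputable def evalTorus (F : Type) [Field F] :
    MvPolynomial (Fin 2) F →ₗ[F] ((Fˣ × Fˣ) → F) :=
  LinearMap.pi fun t => (aeval ![((t.1 : F)), ((t.2 : F))]).toLinearMap

lemma evalTorus_apply (f : MvPolynomial (Fin 2) F) (t : Fˣ × Fˣ) :
    evalTorus F f t = eval ![((t.1 : F)), ((t.2 : F))] f := by
  rw [evalTorus, LinearMap.pi_apply, AlgHom.toLinearMap_apply, aeval_eq_eval']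

lemma zeros_filter_bound (a : ℕ) (f : MvPolynomial (Fin 2) F) (hf : f ≠ 0)
    (hdeg : f.totalDegree ≤ a) :
    (univ.filter fun t : Fˣ × Fˣ => evalTorus F f t = 0).card ≤
      a * (Fintype.card F - 1) := by
  refine le_trans (le_of_eq ?_) (zeros_count_bound a f hf hdeg)
  simp only [evalTorus_apply]

/-- A nonzero polynomial of total degree at most `a ≤ q - 2` has at most `a(q-1)`
zeros in the torus; consequently the degree-`≤ a` evaluation code has
minimum distance at least `(q-1)² - a(q-1)`. -/
theorem zeros_bound_total_degree (F : Type) [Field F] [Fintype F] [DecidableEq F]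
    (a : ℕ) (ha : 1 ≤ a) (haq : a ≤ Fintype.card F - 2) :
    (∀ f : MvPolynomial (Fin 2) F, f ≠ 0 → f.totalDegree ≤ a →
      Nat.card {t : Fˣ × Fˣ // evalTorus F f t = 0} ≤ a * (Fintype.card F - 1)) ∧
    (∀ c ∈ (restrictTotalDegree (Fin 2) F a).map (evalTorus F), c ≠ 0 →
      (Fintype.card F - 1) ^ 2 - a * (Fintype.card F - 1) ≤ hammingNorm c) := by
  classical
  constructor
  · intro f hf hdeg
    rw [Nat.card_eq_fintype_card, Fintype.card_subtype]
    exact zeros_filter_bound a f hf hdeg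
  · intro c hc hcne
    obtain ⟨f, hfm, rfl⟩ := Submodule.mem_map.mp hc
    have hdeg : f.totalDegree ≤ a := (mem_restrictTotalDegree _ _ _).mp hfm
    have hf : f ≠ 0 := by
      intro h
      exact hcne (by rw [h, map_zero])
    have hZ : (univ.filter fun t : Fˣ × Fˣ => evalTorus F f t = 0).card ≤
        a * (Fintype.card F - 1) := zeros_filter_bound a f hf hdeg
    have hsplit : (univ.filter fun t : Fˣ × Fˣ => evalTorus F f t = 0).card +
        (univ.filter fun t : Fˣ × Fˣ => ¬ evalTorus F f t = 0).card =
        (Fintype.card F - 1) ^ 2 := by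
      rw [Finset.card_filter_add_card_filter_not, Finset.card_univ,
        Fintype.card_prod, Fintype.card_units, sq]
    have hnorm : hammingNorm (evalTorus F f) =
        (univ.filter fun t : Fˣ × Fˣ => ¬ evalTorus F f t = 0).card := by
      rw [hammingNorm]
    omega
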